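/- (Clique bound.) Let r, s, n, j be integers with 1 < r ≤ n, 1 < s ≤ n, and n < r+s. Let G be a simple graph containing a set A of s pairwise adjacent vertices (an s-clique) and a set B of r pairwise adjacent vertices (an r-clique) disjoint from A, such that every vertex of B is adjacent to at least j vertices of A. If C₁, …, C_k are mutually orthogonal n-colorings of G, then k·(r+s−n) ≤ r·(s−j). -/

import Mathlib

/-- A proper `n`-coloring of a simple graph `G`. -/
def IsProperColoring {V : Type*} (G : SimpleGraph V) (n : ℕ) (C : V → Fin n) : Prop :=
  ∀ u v, G.Adj u v → C u ≠ C v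

/-- Two `n`-colorings are orthogonal if whenever two distinct vertices share a color
in the first, they have distinct colors in the second. -/
def OrthogonalColorings {V : Type*} {n : ℕ} (C₁ C₂ : V → Fin n) : Prop :=
  ∀ u v, u ≠ v → C₁ u = C₁ v → C₂ u ≠ C₂ v

/-- Clique bound: if `G` contains disjoint cliques `A` (of size `s`) and `B` (of size
`r`), with `1 < r, s ≤ n < r + s`, and every vertex of `B` is adjacent to at least `j`
vertices of `A`, then `k` mutually orthogonal `n`-colorings satisfy
`k·(r + s − n) ≤ r·(s − j)`. -/
theorem stmt_2 {V : Type*} [DecidableEq V] (G : SimpleGraph V) [DecidableRel G.Adj]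
    (r s n j k : ℕ) (hr : 1 < r) (hrn : r ≤ n) (hs : 1 < s) (hsn : s ≤ n)
    (hn : n < r + s)
    (A B : Finset V) (hAcard : A.card = s) (hBcard : B.card = r)
    (hA : ∀ u ∈ A, ∀ v ∈ A, u ≠ v → G.Adj u v)
    (hB : ∀ u ∈ B, ∀ v ∈ B, u ≠ v → G.Adj u v)
    (hdisj : Disjoint A B)
    (hj : ∀ b ∈ B, j ≤ (A.filter (fun a => G.Adj b a)).card)
    (C : Fin k → V → Fin n)
    (hproper : ∀ i, IsProperColoring G n (C i))
    (horth : ∀ i i', i ≠ i' → OrthogonalColorings (C i) (C i')) :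
    (k : ℤ) * ((r : ℤ) + s - n) ≤ (r : ℤ) * ((s : ℤ) - j) := by
  classical
  -- the "bad pair" sets
  set P : Fin k → Finset (V × V) := fun i =>
    (B ×ˢ A).filter (fun p => ¬ G.Adj p.1 p.2 ∧ C i p.1 = C i p.2) with hP
  have hne : ∀ ⦃b a : V⦄, b ∈ B → a ∈ A → b ≠ a := by
    intro b a hb ha h
    exact (Finset.disjoint_right.mp hdisj hb) (h ▸ ha)
  -- injectivity of colorings on cliques
  have injA : ∀ i, Set.InjOn (C i) (A : Set V) := by
    intro i a ha a' ha' h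
    by_contra hne'
    exact hproper i a a' (hA a ha a' ha' hne') h
  have injB : ∀ i, Set.InjOn (C i) (B : Set V) := by
    intro i a ha a' ha' h
    by_contra hne'
    exact hproper i a a' (hB a ha a' ha' hne') h
  -- pairwise disjointness of P i
  have hdisjP : ((Finset.univ : Finset (Fin k)) : Set (Fin k)).PairwiseDisjoint P := by
    intro i _ i' _ hii'
    refine Finset.disjoint_left.mpr ?_
    intro p hp hp'
    simp only [hP, Finset.mem_filter, Finset.mem_product] at hp hp'
    exact horth i i' hii' p.1 p.2 (hne hp.1.1 hp.1.2) hp.2.2 hp'.2.2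
  -- lower bound on each card
  have hcardP : ∀ i, r + s - n ≤ (P i).card := by
    intro i
    set B' := B.filter (fun b => ∃ a ∈ A, C i a = C i b) with hB'
    -- card of complement
    have hcompl : (B.filter (fun b => ¬ ∃ a ∈ A, C i a = C i b)).card ≤ n - s := by
      set Bc := B.filter (fun b => ¬ ∃ a ∈ A, C i a = C i b) with hBc
      have himg : Bc.image (C i) ⊆ Finset.univ \ A.image (C i) := by
        intro c hc
        simp only [hBc, Finset.mem_image, Finset.mem_filter] at hc
        obtain ⟨b, ⟨hb, hnb⟩, rfl⟩ := hc
        simp only [Finset.mem_sdiff, Finset.mem_univ, true_and, Finset.mem_image]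
        rintro ⟨a, ha, hac⟩
        exact hnb ⟨a, ha, hac⟩
      have hsubBc : (Bc : Set V) ⊆ (B : Set V) := fun x hx =>
        Finset.mem_coe.mpr (Finset.filter_subset _ _ hx)
      have h1 : Bc.card = (Bc.image (C i)).card :=
        (Finset.card_image_of_injOn ((injB i).mono hsubBc)).symm
      have h2 : (A.image (C i)).card = s := by
        rw [Finset.card_image_of_injOn (injA i), hAcard]
      have h3 : (Finset.univ \ A.image (C i)).card = n - s := by
        rw [Finset.card_sdiff_of_subset (Finset.subset_univ _), h2, Finset.card_univ, Fintype.card_fin]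
      rw [h1]
      calc (Bc.image (C i)).card ≤ (Finset.univ \ A.image (C i)).card :=
            Finset.card_le_card himg
        _ = n - s := h3
    have hsplit : B'.card + (B.filter (fun b => ¬ ∃ a ∈ A, C i a = C i b)).card = r := by
      rw [hB', Finset.card_filter_add_card_filter_not, hBcard]
    -- map B' into P i
    have hmap : B'.card ≤ (P i).card := by
      have hex : ∀ b ∈ B', ∃ a ∈ A, C i a = C i b := by
        intro b hb
        exact (Finset.mem_filter.mp hb).2
      refine Finset.card_le_card_of_injOn
        (fun b => (b, if h : ∃ a ∈ A, C i a = C i b then h.choose else b)) ?_ ?_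
      · intro b hb
        have hb' := Finset.mem_filter.mp hb
        have h := hb'.2
        show (b, if h : ∃ a ∈ A, C i a = C i b then h.choose else b) ∈ P i
        rw [dif_pos h]
        obtain ⟨ha, hca⟩ := h.choose_spec
        simp only [hP, Finset.mem_filter, Finset.mem_product]
        refine ⟨⟨hb'.1, ha⟩, ?_, hca.symm⟩
        intro hadj
        exact hproper i _ _ hadj hca.symm
      · intro b _ b' _ h
        exact congrArg Prod.fst h
    omega
  -- the union of the P i's
  have hsum : k * (r + s - n) ≤ (Finset.univ.biUnion P).card := by
    rw [Finset.card_biUnion (fun i _ i' _ h => hdisjP (Finset.mem_coe.mpr (Finset.mem_univ i))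
      (Finset.mem_coe.mpr (Finset.mem_univ i')) h)]
    calc k * (r + s - n) = ∑ _i : Fin k, (r + s - n) := by
          simp [Finset.sum_const, Finset.card_univ]
      _ ≤ ∑ i, (P i).card := Finset.sum_le_sum (fun i _ => hcardP i)
  -- upper bound via non-adjacent pairs
  set Q : Finset (V × V) := (B ×ˢ A).filter (fun p => ¬ G.Adj p.1 p.2) with hQdef
  have hsub : Finset.univ.biUnion P ⊆ Q := by
    intro p hp
    obtain ⟨i, _, hpi⟩ := Finset.mem_biUnion.mp hp
    simp only [hP, Finset.mem_filter, Finset.mem_product] at hpi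
    simp only [hQdef, Finset.mem_filter, Finset.mem_product]
    exact ⟨hpi.1, hpi.2.1⟩
  have hQcard : Q.card ≤ r * (s - j) := by
    have hfib : ∀ p ∈ Q, p.1 ∈ B := by
      intro p hp
      simp only [hQdef, Finset.mem_filter, Finset.mem_product] at hp
      exact hp.1.1
    rw [Finset.card_eq_sum_card_fiberwise hfib]
    have hbound : ∀ b ∈ B, (Q.filter (fun p => p.1 = b)).card ≤ s - j := by
      intro b hb
      have heq : Q.filter (fun p => p.1 = b) =
          (A.filter (fun a => ¬ G.Adj b a)).image (fun a => (b, a)) := by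
        ext p
        simp only [hQdef, Finset.mem_filter, Finset.mem_product, Finset.mem_image]
        constructor
        · rintro ⟨⟨⟨h1, h2⟩, h3⟩, h4⟩
          exact ⟨p.2, ⟨h2, h4 ▸ h3⟩, by rw [← h4]⟩
        · rintro ⟨a, ⟨ha, hna⟩, rfl⟩
          exact ⟨⟨⟨hb, ha⟩, hna⟩, rfl⟩
      rw [heq, Finset.card_image_of_injective _ (fun a a' h => (Prod.mk.injEq _ _ _ _ ▸ h).2)]
      have h1 : (A.filter (fun a => G.Adj b a)).card +
          (A.filter (fun a => ¬ G.Adj b a)).card = s := by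
        rw [Finset.card_filter_add_card_filter_not, hAcard]
      have h2 := hj b hb
      omega
    calc ∑ b ∈ B, (Q.filter (fun p => p.1 = b)).card ≤ ∑ _b ∈ B, (s - j) :=
          Finset.sum_le_sum hbound
      _ = r * (s - j) := by rw [Finset.sum_const, hBcard, smul_eq_mul]
  have hnat : k * (r + s - n) ≤ r * (s - j) :=
    hsum.trans ((Finset.card_le_card hsub).trans hQcard)
  have hjs : j ≤ s := by
    obtain ⟨b, hb⟩ := Finset.card_pos.mp (by rw [hBcard]; omega : 0 < B.card)
    calc j ≤ (A.filter (fun a => G.Adj b a)).card := hj b hb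
      _ ≤ A.card := Finset.card_filter_le _ _
      _ = s := hAcard
  have e1 : ((r : ℤ) + s - n) = ((r + s - n : ℕ) : ℤ) := by omega
  have e2 : ((s : ℤ) - j) = ((s - j : ℕ) : ℤ) := by omega
  rw [e1, e2]
  exact_mod_cast hnat
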